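/- arXiv:1407.6652 — 5 statements merged into one kernel-verified Lean document; each statement's English description precedes it below -/
import Mathlib

section
/- Assume the Hill setup. Then Δ(ν) − 2·cos(T·√(−ν)) → 0 as ν → −∞. -/
open Real Filter Set

noncomputable section

/-- The (Floquet) spectrum of the linearized Klein--Gordon spectral problem
`(c^2-1) w'' - 2 c lam w' + (lam^2 + Q z) w = 0`: the set of `lam : ℂ` for which
there is a nontrivial bounded solution `w : ℝ → ℂ`. -/
def KGSpectrum (c : ℝ) (Q : ℝ → ℝ) : Set ℂ :=
  {lam : ℂ | ∃ w wd wdd : ℝ → ℂ,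
    (∀ z, HasDerivAt w (wd z) z) ∧ (∀ z, HasDerivAt wd (wdd z) z) ∧
    (∀ z : ℝ, ((c : ℂ) ^ 2 - 1) * wdd z - 2 * (c : ℂ) * lam * wd z
        + (lam ^ 2 + (Q z : ℂ)) * w z = 0) ∧
    (∃ z, w z ≠ 0) ∧ (∃ M : ℝ, ∀ z, ‖w z‖ ≤ M)}

/-- The wave exhibits a dynamical Hamiltonian–Hopf instability at `lam` if every
neighborhood of `lam` contains a point of the spectrum that is not purely imaginary. -/
def HasDHHInstabilityAt (c : ℝ) (Q : ℝ → ℝ) (lam : ℂ) : Prop :=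
  ∀ U ∈ nhds lam, ∃ μ ∈ KGSpectrum c Q, μ ∈ U ∧ μ.re ≠ 0

/-- `y1, y2` (with derivatives `y1d, y2d`) are the canonical fundamental solutions of
Hill's equation `y'' + P y = ν y` with `y1(0)=1, y1'(0)=0, y2(0)=0, y2'(0)=1`,
for every value of the spectral parameter `ν`. -/
def IsHillFundamental (P : ℝ → ℝ) (y1 y1d y2 y2d : ℝ → ℝ → ℝ) : Prop :=
  ∀ ν : ℝ,
    (∀ z, HasDerivAt (y1 ν) (y1d ν z) z) ∧
    (∀ z, HasDerivAt (y1d ν) (ν * y1 ν z - P z * y1 ν z) z) ∧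
    (∀ z, HasDerivAt (y2 ν) (y2d ν z) z) ∧
    (∀ z, HasDerivAt (y2d ν) (ν * y2 ν z - P z * y2 ν z) z) ∧
    y1 ν 0 = 1 ∧ y1d ν 0 = 0 ∧ y2 ν 0 = 0 ∧ y2d ν 0 = 1

lemma aux_deriv_nonpos_le {f f' : ℝ → ℝ} (hf : ∀ z, HasDerivAt f (f' z) z)
    {a b : ℝ} (hab : a ≤ b) (h : ∀ z ∈ Set.Icc a b, f' z ≤ 0) : f b ≤ f a := by
  have hA : AntitoneOn f (Set.Icc a b) := by
    apply antitoneOn_of_deriv_nonpos (convex_Icc a b)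
      (fun z _ => (hf z).continuousAt.continuousWithinAt)
      (fun z hz => ((hf z).differentiableAt).differentiableWithinAt)
    intro z hz
    rw [(hf z).deriv]
    exact h z (interior_subset hz)
  exact hA (Set.left_mem_Icc.2 hab) (Set.right_mem_Icc.2 hab) hab

/-- Simple Gronwall inequality. -/
lemma aux_gronwall {E E' : ℝ → ℝ} (hE : ∀ z, HasDerivAt E (E' z) z)
    {K t : ℝ} (ht : 0 ≤ t)
    (h : ∀ z ∈ Set.Icc 0 t, E' z ≤ K * E z) :
    ∀ s ∈ Set.Icc (0:ℝ) t, E s ≤ E 0 * Real.exp (K * s) := by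
  intro s hs
  have hexp : ∀ z : ℝ, HasDerivAt (fun z => Real.exp (-K * z)) (-K * Real.exp (-K * z)) z := by
    intro z
    simpa [mul_comm] using ((hasDerivAt_id z).const_mul (-K)).exp
  have hH : ∀ z, HasDerivAt (fun z => E z * Real.exp (-K * z))
      ((E' z - K * E z) * Real.exp (-K * z)) z := by
    intro z
    have := (hE z).mul (hexp z)
    refine this.congr_deriv ?_
    ring
  have hle : E s * Real.exp (-K * s) ≤ E 0 * Real.exp (-K * 0) := by
    apply aux_deriv_nonpos_le hH hs.1
    intro z hz
    have h1 := h z ⟨hz.1, hz.2.trans hs.2⟩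
    have h2 : (0:ℝ) ≤ Real.exp (-K * z) := (Real.exp_pos _).le
    nlinarith
  have h3 : (0:ℝ) < Real.exp (K * s) := Real.exp_pos _
  have h4 := mul_le_mul_of_nonneg_right hle h3.le
  calc E s = E s * Real.exp (-K * s) * Real.exp (K * s) := by
        rw [mul_assoc, ← Real.exp_add]; simp
    _ ≤ E 0 * Real.exp (-K * 0) * Real.exp (K * s) := h4
    _ = E 0 * Real.exp (K * s) := by simp

/-- If `F 0 = 0`, `F ≥ 0` on `[0,t]` and `F' ≤ 2B√F` on `[0,t]`, then `√(F t) ≤ B t`. -/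
lemma aux_sqrt_growth {F F' : ℝ → ℝ} (hF : ∀ z, HasDerivAt F (F' z) z)
    (hF0 : F 0 = 0) {B t : ℝ} (hB : 0 ≤ B) (ht : 0 ≤ t)
    (hpos : ∀ z ∈ Set.Icc 0 t, 0 ≤ F z)
    (h : ∀ z ∈ Set.Icc 0 t, F' z ≤ 2 * B * Real.sqrt (F z)) :
    Real.sqrt (F t) ≤ B * t := by
  have key : ∀ ε : ℝ, 0 < ε → Real.sqrt (F t + ε) ≤ Real.sqrt ε + B * t := by
    intro ε hε
    set G := fun z => Real.sqrt (F z + ε) - B * z with hGdef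
    have hGA : AntitoneOn G (Set.Icc 0 t) := by
      apply antitoneOn_of_deriv_nonpos (convex_Icc 0 t)
      · apply ContinuousOn.sub
        · exact (Real.continuous_sqrt.comp ((continuous_iff_continuousAt.2 fun z => (hF z).continuousAt).add
            continuous_const)).continuousOn
        · exact (continuous_const.mul continuous_id).continuousOn
      · intro z hz
        rw [interior_Icc] at hz
        have hFz : 0 ≤ F z := hpos z ⟨hz.1.le, hz.2.le⟩
        have hne : F z + ε ≠ 0 := by positivity
        exact (((Real.hasDerivAt_sqrt hne).comp z ((hF z).add_const ε)).sub
          ((hasDerivAt_id z).const_mul B)).differentiableAt.differentiableWithinAt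
      · intro z hz
        rw [interior_Icc] at hz
        have hzI : z ∈ Set.Icc 0 t := ⟨hz.1.le, hz.2.le⟩
        have hFz : 0 ≤ F z := hpos z hzI
        have hne : F z + ε ≠ 0 := by positivity
        have hG' : HasDerivAt G (1 / (2 * Real.sqrt (F z + ε)) * F' z - B * 1) z :=
          ((Real.hasDerivAt_sqrt hne).comp z ((hF z).add_const ε)).sub
            ((hasDerivAt_id z).const_mul B)
        rw [hG'.deriv]
        have hs1 : Real.sqrt (F z) ≤ Real.sqrt (F z + ε) := Real.sqrt_le_sqrt (by linarith)
        have hs2 : (0:ℝ) < Real.sqrt (F z + ε) := Real.sqrt_pos.2 (by linarith)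
        have h1 := h z hzI
        rw [div_mul_eq_mul_div, sub_nonpos, div_le_iff₀ (by positivity)]
        calc 1 * F' z ≤ 2 * B * Real.sqrt (F z) := by linarith
          _ ≤ 2 * B * Real.sqrt (F z + ε) := by nlinarith
          _ = B * 1 * (2 * Real.sqrt (F z + ε)) := by ring
    have := hGA (Set.left_mem_Icc.2 ht) (Set.right_mem_Icc.2 ht) ht
    simp only [hGdef, hF0, zero_add, mul_zero, sub_zero] at this
    linarith
  have hFt : 0 ≤ F t := hpos t ⟨ht, le_refl t⟩
  refine le_of_forall_pos_le_add ?_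
  intro δ hδ
  have h1 := key (δ^2) (by positivity)
  have h2 : Real.sqrt (F t) ≤ Real.sqrt (F t + δ^2) := Real.sqrt_le_sqrt (by nlinarith)
  rw [Real.sqrt_sq hδ.le] at h1
  linarith


lemma aux_abs_le_of_sq_le {a b : ℝ} (ha : 0 ≤ a) (hb : 0 ≤ b) (h : a^2 ≤ b^2) : a ≤ b := by
  nlinarith

/-- Comparison of a solution of `y'' + ω² y = P y` with the solution `f` of
`f'' + ω² f = 0` having the same initial data. -/
lemma aux_hill_compare (T M ω : ℝ) (hT : 0 < T) (hM : 0 ≤ M) (hω : 1 ≤ ω)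
    (P : ℝ → ℝ) (hP : ∀ z ∈ Set.Icc 0 T, |P z| ≤ M)
    (y yd : ℝ → ℝ)
    (hy : ∀ z, HasDerivAt y (yd z) z)
    (hyd : ∀ z, HasDerivAt yd (-(ω^2) * y z - P z * y z) z)
    (f fd : ℝ → ℝ)
    (hf : ∀ z, HasDerivAt f (fd z) z)
    (hfd : ∀ z, HasDerivAt fd (-(ω^2) * f z) z)
    (h0 : f 0 = y 0) (hd0 : fd 0 = yd 0)
    (D : ℝ) (hD : Real.sqrt (ω^2 * (y 0)^2 + (yd 0)^2) * Real.exp (M*T/2) ≤ D) :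
    |y T - f T| * ω^2 ≤ M * D * T ∧ |yd T - fd T| * ω ≤ M * D * T := by
  have hω0 : (0:ℝ) < ω := lt_of_lt_of_le one_pos hω
  have hD0 : 0 ≤ D := le_trans (by positivity) hD
  -- Step 1: energy bound for y
  set E : ℝ → ℝ := fun z => ω^2 * (y z)^2 + (yd z)^2 with hEdef
  have hE : ∀ z, HasDerivAt E (-2 * P z * y z * yd z) z := by
    intro z
    have h1 := (((hy z).pow 2).const_mul (ω^2)).add ((hyd z).pow 2)
    refine h1.congr_deriv ?_
    push_cast
    ring
  have hE0nn : 0 ≤ E 0 := by positivity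
  have hEb : ∀ s ∈ Set.Icc (0:ℝ) T, E s ≤ E 0 * Real.exp (M * s) := by
    apply aux_gronwall hE hT.le
    intro z hz
    have habs := abs_le.1 (hP z hz)
    have k1 : 0 ≤ (M + P z) * (y z + yd z)^2 :=
      mul_nonneg (by linarith) (sq_nonneg _)
    have k2 : 0 ≤ (M - P z) * (y z - yd z)^2 :=
      mul_nonneg (by linarith) (sq_nonneg _)
    have k3 : 0 ≤ M * ((ω^2 - 1) * (y z)^2) :=
      mul_nonneg hM (mul_nonneg (by nlinarith) (sq_nonneg _))
    simp only [hEdef]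
    nlinarith
  have hsupy : ∀ z ∈ Set.Icc (0:ℝ) T, |y z| * ω ≤ D := by
    intro z hz
    apply aux_abs_le_of_sq_le (by positivity) hD0
    have e1 : (|y z| * ω)^2 = ω^2 * (y z)^2 := by rw [mul_pow, sq_abs]; ring
    have e2 : ω^2 * (y z)^2 ≤ E z := by
      simp only [hEdef]; nlinarith [sq_nonneg (yd z)]
    have e3 : E z ≤ E 0 * Real.exp (M * T) := by
      refine (hEb z hz).trans ?_
      have : Real.exp (M * z) ≤ Real.exp (M * T) :=
        Real.exp_le_exp.2 (mul_le_mul_of_nonneg_left hz.2 hM)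
      exact mul_le_mul_of_nonneg_left this hE0nn
    have e4 : (Real.sqrt (E 0) * Real.exp (M*T/2))^2 = E 0 * Real.exp (M * T) := by
      rw [mul_pow, Real.sq_sqrt hE0nn, sq, ← Real.exp_add]
      have : M * T / 2 + M * T / 2 = M * T := by ring
      rw [this]
    have e5 : (Real.sqrt (E 0) * Real.exp (M*T/2))^2 ≤ D^2 := by
      apply pow_le_pow_left₀ (by positivity) hD
    rw [e1]
    calc ω^2 * (y z)^2 ≤ E 0 * Real.exp (M * T) := e2.trans e3
      _ = (Real.sqrt (E 0) * Real.exp (M*T/2))^2 := e4.symm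
      _ ≤ D^2 := e5
  -- Step 2: energy bound for the difference
  set g : ℝ → ℝ := fun z => y z - f z with hgdef
  set gd : ℝ → ℝ := fun z => yd z - fd z with hgddef
  set F : ℝ → ℝ := fun z => ω^2 * (g z)^2 + (gd z)^2 with hFdef
  have hg : ∀ z, HasDerivAt g (gd z) z := fun z => (hy z).sub (hf z)
  have hgd : ∀ z, HasDerivAt gd (-(ω^2) * g z - P z * y z) z := by
    intro z
    have := (hyd z).sub (hfd z)
    refine this.congr_deriv ?_
    simp only [hgdef]
    ring
  have hF : ∀ z, HasDerivAt F (-2 * P z * y z * gd z) z := by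
    intro z
    have h1 := (((hg z).pow 2).const_mul (ω^2)).add ((hgd z).pow 2)
    refine h1.congr_deriv ?_
    push_cast
    ring
  have hF0 : F 0 = 0 := by simp [hFdef, hgdef, hgddef, h0, hd0]
  have hFpos : ∀ z, 0 ≤ F z := fun z => by positivity
  have hB : 0 ≤ M * (D / ω) := by positivity
  have hFgrow : Real.sqrt (F T) ≤ M * (D / ω) * T := by
    apply aux_sqrt_growth hF hF0 hB hT.le (fun z _ => hFpos z)
    intro z hz
    have h1 : |gd z| ≤ Real.sqrt (F z) := by
      rw [← Real.sqrt_sq_eq_abs]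
      apply Real.sqrt_le_sqrt
      simp only [hFdef]
      nlinarith [sq_nonneg (g z)]
    have h2 : |y z| ≤ D / ω := (le_div_iff₀ hω0).2 (hsupy z hz)
    have h3 : -2 * P z * y z * gd z ≤ 2 * (|P z| * |y z| * |gd z|) := by
      have hna : -(P z * y z * gd z) ≤ |P z * y z * gd z| := neg_le_abs _
      have heq : |P z * y z * gd z| = |P z| * |y z| * |gd z| := by
        rw [abs_mul, abs_mul]
      nlinarith [hna, heq]
    have h4 : |P z| * |y z| * |gd z| ≤ M * (D / ω) * Real.sqrt (F z) := by
      apply mul_le_mul (mul_le_mul (hP z hz) h2 (abs_nonneg _) hM) h1 (abs_nonneg _)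
      positivity
    calc -2 * P z * y z * gd z ≤ 2 * (|P z| * |y z| * |gd z|) := h3
      _ ≤ 2 * (M * (D / ω) * Real.sqrt (F z)) := by linarith
      _ = 2 * (M * (D / ω)) * Real.sqrt (F z) := by ring
  -- extract the two conclusions
  have c1 : |g T| * ω ≤ M * (D / ω) * T := by
    refine le_trans ?_ hFgrow
    apply aux_abs_le_of_sq_le (by positivity) (Real.sqrt_nonneg _)
    rw [Real.sq_sqrt (hFpos T)]
    have : (|g T| * ω)^2 = ω^2 * (g T)^2 := by rw [mul_pow, sq_abs]; ring
    rw [this]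
    simp only [hFdef]
    nlinarith [sq_nonneg (gd T)]
  have c2 : |gd T| ≤ M * (D / ω) * T := by
    refine le_trans ?_ hFgrow
    apply aux_abs_le_of_sq_le (abs_nonneg _) (Real.sqrt_nonneg _)
    rw [Real.sq_sqrt (hFpos T), sq_abs]
    simp only [hFdef]
    nlinarith [sq_nonneg (g T)]
  constructor
  · have := mul_le_mul_of_nonneg_right c1 hω0.le
    calc |y T - f T| * ω^2 = |g T| * ω * ω := by simp only [hgdef]; ring
      _ ≤ M * (D / ω) * T * ω := this
      _ = M * D * T := by field_simp <;> ring
  · have := mul_le_mul_of_nonneg_right c2 hω0.le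
    calc |yd T - fd T| * ω = |gd T| * ω := by simp only [hgddef]
      _ ≤ M * (D / ω) * T * ω := this
      _ = M * D * T := by field_simp <;> ring

theorem hill_discriminant_asymptotics
    (T : ℝ) (hT : 0 < T)
    (P : ℝ → ℝ) (hPcont : Continuous P) (hPper : ∀ z, P (z + T) = P z)
    (y1 y1d y2 y2d : ℝ → ℝ → ℝ)
    (hfund : IsHillFundamental P y1 y1d y2 y2d)
    (Δ : ℝ → ℝ) (hΔ : Δ = fun ν => y1 ν T + y2d ν T)
 :
    Filter.Tendsto (fun ν : ℝ => Δ ν - 2 * Real.cos (T * Real.sqrt (-ν)))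
      Filter.atBot (nhds 0) := by
  -- a bound for |P| on [0,T]
  obtain ⟨M0, hM0⟩ := (isCompact_Icc (a := (0:ℝ)) (b := T)).exists_bound_of_continuousOn
    hPcont.continuousOn
  set M : ℝ := max M0 0 with hMdef
  have hM : 0 ≤ M := le_max_right _ _
  have hP : ∀ z ∈ Set.Icc (0:ℝ) T, |P z| ≤ M := by
    intro z hz
    calc |P z| = ‖P z‖ := (Real.norm_eq_abs _).symm
      _ ≤ M0 := hM0 z hz
      _ ≤ M := le_max_left _ _
  set K : ℝ := 2 * (M * T * Real.exp (M * T / 2)) with hKdef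
  -- main estimate for ν ≤ -1
  have main : ∀ ν : ℝ, ν ≤ -1 →
      |Δ ν - 2 * Real.cos (T * Real.sqrt (-ν))| ≤ K / Real.sqrt (-ν) := by
    intro ν hν
    set ω : ℝ := Real.sqrt (-ν) with hωdef
    have hν1 : (1:ℝ) ≤ -ν := by linarith
    have hω : 1 ≤ ω := by
      rw [hωdef, show (1:ℝ) = Real.sqrt 1 from (Real.sqrt_one).symm]
      exact Real.sqrt_le_sqrt hν1
    have hω0 : (0:ℝ) < ω := lt_of_lt_of_le one_pos hω
    have hω2 : ω ^ 2 = -ν := Real.sq_sqrt (by linarith)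
    obtain ⟨h1, h2, h3, h4, h5, h6, h7, h8⟩ := hfund ν
    have hyd1 : ∀ z, HasDerivAt (y1d ν) (-(ω^2) * y1 ν z - P z * y1 ν z) z := by
      intro z
      have e : ν * y1 ν z - P z * y1 ν z = -(ω^2) * y1 ν z - P z * y1 ν z := by
        rw [hω2]; ring
      exact e ▸ h2 z
    have hyd2 : ∀ z, HasDerivAt (y2d ν) (-(ω^2) * y2 ν z - P z * y2 ν z) z := by
      intro z
      have e : ν * y2 ν z - P z * y2 ν z = -(ω^2) * y2 ν z - P z * y2 ν z := by
        rw [hω2]; ring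
      exact e ▸ h4 z
    -- comparison for y1 with cos(ω z)
    have hf1 : ∀ z : ℝ, HasDerivAt (fun z => Real.cos (ω * z)) (-ω * Real.sin (ω * z)) z := by
      intro z
      have := ((hasDerivAt_id z).const_mul ω).cos
      refine this.congr_deriv ?_
      simp only [id_eq]
      ring
    have hfd1 : ∀ z : ℝ, HasDerivAt (fun z => -ω * Real.sin (ω * z))
        (-(ω^2) * Real.cos (ω * z)) z := by
      intro z
      have := (((hasDerivAt_id z).const_mul ω).sin).const_mul (-ω)
      refine this.congr_deriv ?_
      simp only [id_eq]
      ring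
    have comp1 := aux_hill_compare T M ω hT hM hω P hP (y1 ν) (y1d ν) h1 hyd1
        (fun z => Real.cos (ω * z)) (fun z => -ω * Real.sin (ω * z)) hf1 hfd1
        (by simp [h5]) (by simp [h6]) (ω * Real.exp (M * T / 2))
        (by rw [h5, h6]
            norm_num [Real.sqrt_sq hω0.le])
    -- comparison for y2 with sin(ω z)/ω
    have hf2 : ∀ z : ℝ, HasDerivAt (fun z => Real.sin (ω * z) / ω) (Real.cos (ω * z)) z := by
      intro z
      have := (((hasDerivAt_id z).const_mul ω).sin).div_const ω
      refine this.congr_deriv ?_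
      simp only [id_eq]
      field_simp
    have hfd2 : ∀ z : ℝ, HasDerivAt (fun z => Real.cos (ω * z))
        (-(ω^2) * (Real.sin (ω * z) / ω)) z := by
      intro z
      have := ((hasDerivAt_id z).const_mul ω).cos
      refine this.congr_deriv ?_
      simp only [id_eq]
      field_simp
    have comp2 := aux_hill_compare T M ω hT hM hω P hP (y2 ν) (y2d ν) h3 hyd2
        (fun z => Real.sin (ω * z) / ω) (fun z => Real.cos (ω * z)) hf2 hfd2
        (by simp [h7]) (by simp [h8]) (Real.exp (M * T / 2))
        (by rw [h7, h8]
            norm_num [Real.sqrt_one])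
    -- assemble
    have hE : 0 < Real.exp (M * T / 2) := Real.exp_pos _
    have b1 : |y1 ν T - Real.cos (ω * T)| ≤ M * T * Real.exp (M * T / 2) / ω := by
      rw [le_div_iff₀ hω0]
      have hc := comp1.1
      have step : |y1 ν T - Real.cos (ω * T)| * ω * ω ≤
          M * T * Real.exp (M * T / 2) * ω := by
        calc |y1 ν T - Real.cos (ω * T)| * ω * ω
            = |y1 ν T - Real.cos (ω * T)| * ω ^ 2 := by ring
          _ ≤ M * (ω * Real.exp (M * T / 2)) * T := hc
          _ = M * T * Real.exp (M * T / 2) * ω := by ring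
      exact le_of_mul_le_mul_right step hω0
    have b2 : |y2d ν T - Real.cos (ω * T)| ≤ M * T * Real.exp (M * T / 2) / ω := by
      rw [le_div_iff₀ hω0]
      calc |y2d ν T - Real.cos (ω * T)| * ω ≤ M * Real.exp (M * T / 2) * T := comp2.2
        _ = M * T * Real.exp (M * T / 2) := by ring
    have hTω : T * Real.sqrt (-ν) = ω * T := by rw [hωdef]; ring
    rw [hΔ, hTω]
    have habs : |y1 ν T + y2d ν T - 2 * Real.cos (ω * T)| ≤
        |y1 ν T - Real.cos (ω * T)| + |y2d ν T - Real.cos (ω * T)| := by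
      have := abs_add_le (y1 ν T - Real.cos (ω * T)) (y2d ν T - Real.cos (ω * T))
      calc |y1 ν T + y2d ν T - 2 * Real.cos (ω * T)|
          = |(y1 ν T - Real.cos (ω * T)) + (y2d ν T - Real.cos (ω * T))| := by ring_nf
        _ ≤ _ := this
    calc |y1 ν T + y2d ν T - 2 * Real.cos (ω * T)|
        ≤ M * T * Real.exp (M * T / 2) / ω + M * T * Real.exp (M * T / 2) / ω := by
          linarith [habs, b1, b2]
      _ = K / ω := by rw [hKdef]; ring
  -- the squeeze
  have hsq : Tendsto (fun ν : ℝ => Real.sqrt (-ν)) atBot atTop := by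
    have h1 : Tendsto (fun ν : ℝ => -ν) atBot atTop := tendsto_neg_atBot_atTop
    have h2 : Tendsto Real.sqrt atTop atTop := by
      rw [tendsto_atTop_atTop]
      intro b
      refine ⟨(max b 0) ^ 2, fun a ha => ?_⟩
      calc b ≤ max b 0 := le_max_left _ _
        _ = Real.sqrt ((max b 0) ^ 2) := (Real.sqrt_sq (le_max_right _ _)).symm
        _ ≤ Real.sqrt a := Real.sqrt_le_sqrt ha
    exact h2.comp h1
  have hK0 : Tendsto (fun ν : ℝ => K / Real.sqrt (-ν)) atBot (nhds 0) :=
    Tendsto.div_atTop tendsto_const_nhds hsq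
  apply squeeze_zero_norm' _ hK0
  filter_upwards [eventually_le_atBot (-1 : ℝ)] with ν hν
  rw [Real.norm_eq_abs]
  exact main ν hν
end
end

section
/- Assume the Hill setup. Then, as ν → −∞, the canonical solutions satisfy the following uniform WKB-type asymptotics on [0,T]: sup_{0 ≤ z ≤ T} |y₁(z;ν) − cos(√(−ν)·z)| → 0, sup_{0 ≤ z ≤ T} |√(−ν)·y₂(z;ν) − sin(√(−ν)·z)| → 0, sup_{0 ≤ z ≤ T} |y₁'(z;ν)/√(−ν) + sin(√(−ν)·z)| → 0, and sup_{0 ≤ z ≤ T} |y₂'(z;ν) − cos(√(−ν)·z)| → 0, where y₁', y₂' denote derivatives with respect to z. -/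
open Real Filter Set

noncomputable section

private lemma gronwall_aux {K e T z : ℝ} (hK : 0 ≤ K) (he : 0 ≤ e) (hz : 0 ≤ z) (hzT : z ≤ T) :
    gronwallBound 0 K e z ≤ e * T * Real.exp (K * T) := by
  have hT : 0 ≤ T := le_trans hz hzT
  rcases eq_or_lt_of_le hK with h0 | hKpos
  · rw [← h0, gronwallBound_K0]
    simp only [zero_mul, Real.exp_zero]
    nlinarith
  · rw [gronwallBound_of_K_ne_0 hKpos.ne']
    have h1 : Real.exp (K * z) ≤ Real.exp (K * T) := Real.exp_le_exp.2 (by nlinarith)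
    have h2 : Real.exp (K * T) - 1 ≤ K * T * Real.exp (K * T) := by
      have := Real.add_one_le_exp (-(K * T))
      have h3 := Real.exp_pos (K * T)
      have h4 : Real.exp (-(K*T)) * Real.exp (K*T) = 1 := by
        rw [← Real.exp_add]; simp
      nlinarith
    calc 0 * Real.exp (K * z) + e / K * (Real.exp (K * z) - 1)
        ≤ e / K * (Real.exp (K * T) - 1) := by
          rw [zero_mul, zero_add]
          apply mul_le_mul_of_nonneg_left (by linarith) (by positivity)
      _ ≤ e / K * (K * T * Real.exp (K * T)) := by
          apply mul_le_mul_of_nonneg_left h2 (by positivity)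
      _ = e * T * Real.exp (K * T) := by field_simp

private lemma rot_aux (a b θ c d : ℝ) :
    (((a:ℂ) + (b:ℝ) * Complex.I) * Complex.exp ((θ:ℝ) * Complex.I)
      - ((c:ℂ) + (d:ℝ) * Complex.I)) * Complex.exp (-((θ:ℝ) * Complex.I))
    = ((a - (c * Real.cos θ + d * Real.sin θ) : ℝ) : ℂ)
      + ((b - (d * Real.cos θ - c * Real.sin θ) : ℝ)) * Complex.I := by
  have h : Complex.exp ((θ:ℝ) * Complex.I) * Complex.exp (-((θ:ℝ) * Complex.I)) = 1 := by
    rw [← Complex.exp_add]; simp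
  have he : Complex.exp (-((θ:ℝ) * Complex.I)) = Complex.cos θ - Complex.sin θ * Complex.I := by
    rw [show -((θ:ℝ) * Complex.I) = ((-θ : ℝ) : ℂ) * Complex.I by push_cast; ring,
      Complex.exp_mul_I]
    simp [Complex.cos_neg, Complex.sin_neg]; ring
  calc (((a:ℂ) + (b:ℝ) * Complex.I) * Complex.exp ((θ:ℝ) * Complex.I)
      - ((c:ℂ) + (d:ℝ) * Complex.I)) * Complex.exp (-((θ:ℝ) * Complex.I))
      = ((a:ℂ) + (b:ℝ) * Complex.I) * (Complex.exp ((θ:ℝ) * Complex.I) * Complex.exp (-((θ:ℝ) * Complex.I)))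
        - ((c:ℂ) + (d:ℝ) * Complex.I) * Complex.exp (-((θ:ℝ) * Complex.I)) := by ring
    _ = ((a:ℂ) + (b:ℝ) * Complex.I) - ((c:ℂ) + (d:ℝ) * Complex.I) * (Complex.cos θ - Complex.sin θ * Complex.I) := by
        rw [h, he]; ring
    _ = _ := by
        simp only [Complex.ext_iff, Complex.add_re, Complex.add_im, Complex.mul_re,
          Complex.mul_im, Complex.sub_re, Complex.sub_im, Complex.cos_ofReal_re,
          Complex.cos_ofReal_im, Complex.sin_ofReal_re, Complex.sin_ofReal_im,
          Complex.I_re, Complex.I_im, Complex.ofReal_re, Complex.ofReal_im]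
        constructor <;> ring


private lemma hill_key (P : ℝ → ℝ) (T M : ℝ) (hM0 : 0 ≤ M)
    (hM : ∀ z ∈ Icc (0:ℝ) T, |P z| ≤ M) (hT : 0 < T)
    (ν : ℝ) (hν : ν < 0)
    (y yd : ℝ → ℝ) (hy : ∀ z, HasDerivAt y (yd z) z)
    (hyd : ∀ z, HasDerivAt yd (ν * y z - P z * y z) z) :
    ∀ z ∈ Icc (0:ℝ) T,
      ‖((y z : ℂ) + ((yd z / Real.sqrt (-ν) : ℝ) : ℂ) * Complex.I) *
          Complex.exp (((Real.sqrt (-ν) * z : ℝ) : ℂ) * Complex.I)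
        - ((y 0 : ℂ) + ((yd 0 / Real.sqrt (-ν) : ℝ) : ℂ) * Complex.I)‖
      ≤ (M / Real.sqrt (-ν)) * ‖((y 0 : ℂ) + ((yd 0 / Real.sqrt (-ν) : ℝ) : ℂ) * Complex.I)‖
          * T * Real.exp (M / Real.sqrt (-ν) * T) := by
  set ω : ℝ := Real.sqrt (-ν) with hωdef
  have hω : 0 < ω := Real.sqrt_pos.2 (by linarith)
  have hω2 : ω ^ 2 = -ν := Real.sq_sqrt (by linarith)
  set v : ℝ → ℂ := fun z =>
    ((y z : ℂ) + ((yd z / ω : ℝ) : ℂ) * Complex.I) * Complex.exp (((ω * z : ℝ) : ℂ) * Complex.I)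
    with hvdef
  set vd : ℝ → ℂ := fun z =>
    ((-(P z * y z / ω) : ℝ) : ℂ) * Complex.I * Complex.exp (((ω * z : ℝ) : ℂ) * Complex.I)
    with hvddef
  have hv : ∀ z, HasDerivAt v (vd z) z := by
    intro z
    have h1 : HasDerivAt (fun z => ((y z : ℂ) + ((yd z / ω : ℝ) : ℂ) * Complex.I))
        ((yd z : ℂ) + (((ν * y z - P z * y z) / ω : ℝ) : ℂ) * Complex.I) z := by
      exact ((hy z).ofReal_comp).add ((((hyd z).div_const ω).ofReal_comp).mul_const Complex.I)
    have h2 : HasDerivAt (fun z : ℝ => (((ω * z : ℝ) : ℂ) * Complex.I))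
        ((ω : ℂ) * Complex.I) z := by
      have : HasDerivAt (fun z : ℝ => ((ω * z : ℝ) : ℂ)) (ω : ℂ) z := by
        have := ((hasDerivAt_id z).const_mul ω).ofReal_comp
        simpa using this
      simpa using this.mul_const Complex.I
    have h3 : HasDerivAt (fun z : ℝ => Complex.exp (((ω * z : ℝ) : ℂ) * Complex.I))
        (Complex.exp (((ω * z : ℝ) : ℂ) * Complex.I) * ((ω : ℂ) * Complex.I)) z := h2.cexp
    refine (h1.mul h3).congr_deriv ?_
    symm
    rw [hvddef]
    have hI := Complex.I_sq
    have hω2c : (ω : ℂ) ^ 2 = -(ν : ℂ) := by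
      rw [show -(ν:ℂ) = ((-ν : ℝ) : ℂ) by push_cast; ring, ← hω2]; push_cast; ring
    have hωne : (ω : ℂ) ≠ 0 := by exact_mod_cast hω.ne'
    push_cast
    set E : ℂ := Complex.exp ((ω : ℂ) * (z : ℂ) * Complex.I) with hE
    field_simp
    linear_combination ((ω:ℂ) * (yd z : ℂ) * E - E * ω * (yd z) * (1 + ω)
        + (E * (ω:ℂ) ^ 2 * (yd z : ℂ) - E * ω * (yd z))) * hI +
      (Complex.I * E * (y z : ℂ) - (y z : ℂ) * Complex.I * E * (ω + 1)
        + (y z : ℂ) * Complex.I * E * (ω - 1)) * hω2c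
  -- norms
  have hnE : ∀ t : ℝ, ‖Complex.exp (((ω * t : ℝ) : ℂ) * Complex.I)‖ = 1 := fun t => by
    rw [Complex.norm_exp_ofReal_mul_I]
  have hyle : ∀ t : ℝ, |y t| ≤ ‖v t‖ := by
    intro t
    have h1 : ‖v t‖ = ‖((y t : ℂ) + ((yd t / ω : ℝ) : ℂ) * Complex.I)‖ := by
      rw [hvdef]; rw [norm_mul, hnE, mul_one]
    have h2 : ((y t : ℂ) + ((yd t / ω : ℝ) : ℂ) * Complex.I).re = y t := by simp
    rw [h1]
    calc |y t| = |((y t : ℂ) + ((yd t / ω : ℝ) : ℂ) * Complex.I).re| := by rw [h2]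
      _ ≤ _ := Complex.abs_re_le_norm _
  set w : ℝ → ℂ := fun t => v t - v 0 with hwdef
  have hw : ∀ t, HasDerivAt w (vd t) t := fun t => (hv t).sub_const (v 0)
  have hwc : ContinuousOn w (Icc 0 T) :=
    (continuous_iff_continuousAt.2 fun t => (hw t).continuousAt).continuousOn
  have hbound : ∀ x ∈ Ico (0:ℝ) T,
      ‖vd x‖ ≤ (M / ω) * ‖w x‖ + (M / ω) * ‖v 0‖ := by
    intro x hx
    have hvdx : ‖vd x‖ = |P x * y x| / ω := by
      rw [hvddef]
      rw [norm_mul, norm_mul, hnE, Complex.norm_I, Complex.norm_real, mul_one, mul_one,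
        Real.norm_eq_abs, abs_neg, abs_div, abs_of_pos hω]
    have hPx : |P x| ≤ M := hM x ⟨hx.1, hx.2.le⟩
    have hvx : ‖v x‖ ≤ ‖w x‖ + ‖v 0‖ := by
      have : v x = w x + v 0 := by rw [hwdef]; ring
      rw [this]; exact norm_add_le _ _
    have := hyle x
    rw [hvdx, abs_mul]
    have h6 : |y x| ≤ ‖w x‖ + ‖v 0‖ := le_trans this hvx
    have h5 : |P x| * |y x| / ω ≤ M * (‖w x‖ + ‖v 0‖) / ω := by gcongr
    calc |P x| * |y x| / ω ≤ M * (‖w x‖ + ‖v 0‖) / ω := h5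
      _ = (M / ω) * ‖w x‖ + (M / ω) * ‖v 0‖ := by ring
  intro z hz
  have hgr := norm_le_gronwallBound_of_norm_deriv_right_le hwc
    (fun x _ => (hw x).hasDerivWithinAt) (show ‖w 0‖ ≤ 0 by simp [hwdef]) hbound z hz
  have hKnn : 0 ≤ M / ω := div_nonneg hM0 hω.le
  have henn : 0 ≤ (M / ω) * ‖v 0‖ := mul_nonneg hKnn (norm_nonneg _)
  have hfin : gronwallBound 0 (M / ω) ((M / ω) * ‖v 0‖) (z - 0)
      ≤ (M / ω) * ‖v 0‖ * T * Real.exp ((M / ω) * T) := by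
    rw [sub_zero]
    exact gronwall_aux hKnn henn hz.1 hz.2
  have : ‖w z‖ ≤ (M / ω) * ‖v 0‖ * T * Real.exp ((M / ω) * T) := le_trans hgr hfin
  simpa [hwdef, hvdef] using this

private lemma extract_aux (a b θ c d : ℝ) :
    |a - (c * Real.cos θ + d * Real.sin θ)| ≤
      ‖((a:ℂ) + (b:ℝ) * Complex.I) * Complex.exp ((θ:ℝ) * Complex.I)
        - ((c:ℂ) + (d:ℝ) * Complex.I)‖ ∧
    |b - (d * Real.cos θ - c * Real.sin θ)| ≤
      ‖((a:ℂ) + (b:ℝ) * Complex.I) * Complex.exp ((θ:ℝ) * Complex.I)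
        - ((c:ℂ) + (d:ℝ) * Complex.I)‖ := by
  set W : ℂ := ((a:ℂ) + (b:ℝ) * Complex.I) * Complex.exp ((θ:ℝ) * Complex.I)
    - ((c:ℂ) + (d:ℝ) * Complex.I) with hW
  have hne : ‖Complex.exp (-((θ:ℝ) * Complex.I))‖ = 1 := by
    rw [show -((θ:ℝ) * Complex.I) = ((-θ : ℝ) : ℂ) * Complex.I by push_cast; ring]
    rw [Complex.norm_exp_ofReal_mul_I]
  have h1 : ‖W * Complex.exp (-((θ:ℝ) * Complex.I))‖ = ‖W‖ := by
    rw [norm_mul, hne, mul_one]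
  have h2 : W * Complex.exp (-((θ:ℝ) * Complex.I))
      = ((a - (c * Real.cos θ + d * Real.sin θ) : ℝ) : ℂ)
        + ((b - (d * Real.cos θ - c * Real.sin θ) : ℝ)) * Complex.I := rot_aux a b θ c d
  constructor
  · calc |a - (c * Real.cos θ + d * Real.sin θ)|
        = |(W * Complex.exp (-((θ:ℝ) * Complex.I))).re| := by
          rw [h2]
          simp only [Complex.add_re, Complex.mul_re, Complex.ofReal_re, Complex.ofReal_im,
            Complex.I_re, Complex.I_im, mul_zero, zero_mul, mul_one, sub_zero, add_zero,
            zero_sub, zero_add]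
      _ ≤ ‖W * Complex.exp (-((θ:ℝ) * Complex.I))‖ := Complex.abs_re_le_norm _
      _ = ‖W‖ := by rw [h1]
  · calc |b - (d * Real.cos θ - c * Real.sin θ)|
        = |(W * Complex.exp (-((θ:ℝ) * Complex.I))).im| := by
          rw [h2]
          simp only [Complex.add_im, Complex.mul_im, Complex.ofReal_re, Complex.ofReal_im,
            Complex.I_re, Complex.I_im, mul_zero, zero_mul, mul_one, sub_zero, add_zero,
            zero_sub, zero_add]
      _ ≤ ‖W * Complex.exp (-((θ:ℝ) * Complex.I))‖ := Complex.abs_im_le_norm _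
      _ = ‖W‖ := by rw [h1]

private lemma unif_of_bound {T : ℝ} {F : ℝ → ℝ → ℝ} {B : ℝ → ℝ}
    (hB : Filter.Tendsto B Filter.atBot (nhds 0))
    (h : ∀ᶠ ν in Filter.atBot, ∀ z ∈ Set.Icc (0:ℝ) T, |F ν z| ≤ B ν) :
    TendstoUniformlyOn F (fun _ => 0) Filter.atBot (Set.Icc 0 T) := by
  rw [Metric.tendstoUniformlyOn_iff]
  intro ε hε
  filter_upwards [h, hB.eventually (eventually_lt_nhds hε)] with ν h1 h2 z hz
  rw [Real.dist_eq]
  calc |0 - F ν z| = |F ν z| := by rw [zero_sub, abs_neg]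
    _ ≤ B ν := h1 z hz
    _ < ε := h2

theorem hill_wkb_asymptotics
    (T : ℝ) (hT : 0 < T)
    (P : ℝ → ℝ) (hPcont : Continuous P) (hPper : ∀ z, P (z + T) = P z)
    (y1 y1d y2 y2d : ℝ → ℝ → ℝ)
    (hfund : IsHillFundamental P y1 y1d y2 y2d)
    (Δ : ℝ → ℝ) (hΔ : Δ = fun ν => y1 ν T + y2d ν T)
 :
    TendstoUniformlyOn (fun (ν : ℝ) (z : ℝ) => y1 ν z - Real.cos (Real.sqrt (-ν) * z))
      (fun _ => (0 : ℝ)) Filter.atBot (Set.Icc 0 T) ∧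
    TendstoUniformlyOn (fun (ν : ℝ) (z : ℝ) =>
        Real.sqrt (-ν) * y2 ν z - Real.sin (Real.sqrt (-ν) * z))
      (fun _ => (0 : ℝ)) Filter.atBot (Set.Icc 0 T) ∧
    TendstoUniformlyOn (fun (ν : ℝ) (z : ℝ) =>
        y1d ν z / Real.sqrt (-ν) + Real.sin (Real.sqrt (-ν) * z))
      (fun _ => (0 : ℝ)) Filter.atBot (Set.Icc 0 T) ∧
    TendstoUniformlyOn (fun (ν : ℝ) (z : ℝ) => y2d ν z - Real.cos (Real.sqrt (-ν) * z))
      (fun _ => (0 : ℝ)) Filter.atBot (Set.Icc 0 T) := by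
  
  clear hΔ
  -- a uniform bound M for |P| on [0, T]
  obtain ⟨M₀, hM₀⟩ := isCompact_Icc.exists_bound_of_continuousOn
    (hPcont.continuousOn (s := Set.Icc 0 T))
  set M : ℝ := max M₀ 0 with hMdef
  have hM0 : 0 ≤ M := le_max_right _ _
  have hM : ∀ z ∈ Set.Icc (0:ℝ) T, |P z| ≤ M := fun z hz =>
    le_trans (by simpa [Real.norm_eq_abs] using hM₀ z hz) (le_max_left _ _)
  -- the bounding function and its limit
  set B : ℝ → ℝ := fun ν =>
    M / Real.sqrt (-ν) * T * Real.exp (M / Real.sqrt (-ν) * T) with hBdef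
  have hsq : Filter.Tendsto Real.sqrt Filter.atTop Filter.atTop := by
    apply Filter.tendsto_atTop_atTop.2
    intro b
    refine ⟨(max b 0) ^ 2, fun a ha => le_trans (le_max_left b 0) ?_⟩
    rw [← Real.sqrt_sq (le_max_right b 0)]
    exact Real.sqrt_le_sqrt ha
  have hωt : Filter.Tendsto (fun ν : ℝ => Real.sqrt (-ν)) Filter.atBot Filter.atTop :=
    hsq.comp tendsto_neg_atBot_atTop
  have h1 : Filter.Tendsto (fun ν : ℝ => M / Real.sqrt (-ν)) Filter.atBot (nhds 0) :=
    Filter.Tendsto.div_atTop tendsto_const_nhds hωt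
  have h2 : Filter.Tendsto (fun ν : ℝ => Real.exp (M / Real.sqrt (-ν) * T))
      Filter.atBot (nhds 1) := by
    have h1T : Filter.Tendsto (fun ν : ℝ => M / Real.sqrt (-ν) * T) Filter.atBot (nhds 0) := by
      simpa using h1.mul_const T
    have := (Real.continuous_exp.tendsto 0).comp h1T
    rw [Real.exp_zero] at this
    exact this
  have hBt : Filter.Tendsto B Filter.atBot (nhds 0) := by
    have := ((h1.mul_const T).mul h2)
    simpa using this
  -- pointwise bounds for ν < 0
  have hmain : ∀ ν < (0:ℝ), ∀ z ∈ Set.Icc (0:ℝ) T,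
      |y1 ν z - Real.cos (Real.sqrt (-ν) * z)| ≤ B ν ∧
      |Real.sqrt (-ν) * y2 ν z - Real.sin (Real.sqrt (-ν) * z)| ≤ B ν ∧
      |y1d ν z / Real.sqrt (-ν) + Real.sin (Real.sqrt (-ν) * z)| ≤ B ν ∧
      |y2d ν z - Real.cos (Real.sqrt (-ν) * z)| ≤ B ν := by
    intro ν hν z hz
    obtain ⟨ha1, hb1, ha2, hb2, e1, e2, e3, e4⟩ := hfund ν
    set ω : ℝ := Real.sqrt (-ν) with hωdef
    have hω : 0 < ω := Real.sqrt_pos.2 (by linarith)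
    have hωne : ω ≠ 0 := hω.ne'
    -- bound for the first solution
    have hK1 := hill_key P T M hM0 hM hT ν hν (y1 ν) (y1d ν) ha1 hb1 z hz
    have hE1 := extract_aux (y1 ν z) (y1d ν z / ω) (ω * z) (y1 ν 0) (y1d ν 0 / ω)
    have hv01 : ‖((y1 ν 0 : ℂ) + ((y1d ν 0 / ω : ℝ) : ℂ) * Complex.I)‖ = 1 := by
      rw [e1, e2]; norm_num
    have hRHS1 : M / ω * ‖((y1 ν 0 : ℂ) + ((y1d ν 0 / ω : ℝ) : ℂ) * Complex.I)‖ * T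
        * Real.exp (M / ω * T) = B ν := by
      rw [hv01, hBdef, mul_one]
    -- bound for the second solution
    have hK2 := hill_key P T M hM0 hM hT ν hν (y2 ν) (y2d ν) ha2 hb2 z hz
    have hE2 := extract_aux (y2 ν z) (y2d ν z / ω) (ω * z) (y2 ν 0) (y2d ν 0 / ω)
    have hv02 : ‖((y2 ν 0 : ℂ) + ((y2d ν 0 / ω : ℝ) : ℂ) * Complex.I)‖ = 1 / ω := by
      rw [e3, e4]
      simp [Complex.norm_real, Real.norm_eq_abs, abs_div, abs_of_pos hω]
    have hRHS2 : ω * (M / ω * ‖((y2 ν 0 : ℂ) + ((y2d ν 0 / ω : ℝ) : ℂ) * Complex.I)‖ * T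
        * Real.exp (M / ω * T)) = B ν := by
      rw [hv02, hBdef]
      field_simp
      rw [hωdef]
      ring
      rw [mul_inv_cancel_right₀ (Real.sqrt_pos.2 (by linarith)).ne']
    refine ⟨?_, ?_, ?_, ?_⟩
    · have heq : y1 ν z - Real.cos (ω * z)
          = y1 ν z - (y1 ν 0 * Real.cos (ω * z) + y1d ν 0 / ω * Real.sin (ω * z)) := by
        rw [e1, e2]; ring
      rw [heq]
      exact le_trans hE1.1 (by rw [← hRHS1]; exact hK1)
    · have heq : ω * y2 ν z - Real.sin (ω * z)
          = ω * (y2 ν z - (y2 ν 0 * Real.cos (ω * z) + y2d ν 0 / ω * Real.sin (ω * z))) := by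
        rw [e3, e4]; field_simp; all_goals ring
      rw [heq, abs_mul, abs_of_pos hω, ← hRHS2]
      exact mul_le_mul_of_nonneg_left (le_trans hE2.1 hK2) hω.le
    · have heq : y1d ν z / ω + Real.sin (ω * z)
          = y1d ν z / ω - (y1d ν 0 / ω * Real.cos (ω * z) - y1 ν 0 * Real.sin (ω * z)) := by
        rw [e1, e2]; ring
      rw [heq]
      exact le_trans hE1.2 (by rw [← hRHS1]; exact hK1)
    · have heq : y2d ν z - Real.cos (ω * z)
          = ω * (y2d ν z / ω - (y2d ν 0 / ω * Real.cos (ω * z) - y2 ν 0 * Real.sin (ω * z))) := by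
        rw [e3, e4]; field_simp; all_goals ring
      rw [heq, abs_mul, abs_of_pos hω, ← hRHS2]
      exact mul_le_mul_of_nonneg_left (le_trans hE2.2 hK2) hω.le
  have hev := Filter.eventually_lt_atBot (0:ℝ)
  refine ⟨?_, ?_, ?_, ?_⟩
  · exact unif_of_bound hBt (hev.mono fun ν hν z hz => (hmain ν hν z hz).1)
  · exact unif_of_bound hBt (hev.mono fun ν hν z hz => (hmain ν hν z hz).2.1)
  · exact unif_of_bound hBt (hev.mono fun ν hν z hz => (hmain ν hν z hz).2.2.1)
  · exact unif_of_bound hBt (hev.mono fun ν hν z hz => (hmain ν hν z hz).2.2.2)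
end
end

section
/- Let c ∈ ℝ with c² ≠ 1, T > 0, λ ∈ ℂ, and let Q : ℝ → ℝ be continuous. Let w₁, w₂ : ℝ → ℂ be the unique solutions of the spectral problem (c²−1)w'' − 2cλw' + (λ² + Q(z))w = 0 with w₁(0) = 1, w₁'(0) = 0, w₂(0) = 0, w₂'(0) = 1, and let y₁, y₂ : ℝ → ℂ be the unique solutions of Hill's equation y'' + (Q(z)/(c²−1))y = ν y, with ν := (λ/(c²−1))², satisfying y₁(0) = 1, y₁'(0) = 0, y₂(0) = 0, y₂'(0) = 1. Then w₁(T) + w₂'(T) = e^{cλT/(c²−1)}·(y₁(T) + y₂'(T)); that is, the trace of the monodromy matrix of the spectral problem equals e^{cλT/(c²−1)} times the Hill discriminant evaluated at ν. -/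
open Real Filter Set

noncomputable section

lemma constC_of_hasDerivAt_zero {f : ℝ → ℂ} (h : ∀ z, HasDerivAt f 0 z) (a b : ℝ) :
    f a = f b :=
  is_const_of_deriv_eq_zero (fun z => (h z).differentiableAt) (fun z => (h z).deriv) a b

lemma hill_unique (P : ℝ → ℂ) (ν : ℂ) (y1 y1d y2 y2d h hd : ℝ → ℂ)
    (hy1 : ∀ z, HasDerivAt y1 (y1d z) z)
    (hy1d : ∀ z, HasDerivAt y1d ((ν - P z) * y1 z) z)
    (hy2 : ∀ z, HasDerivAt y2 (y2d z) z)
    (hy2d : ∀ z, HasDerivAt y2d ((ν - P z) * y2 z) z)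
    (hy1i : y1 0 = 1) (hy1di : y1d 0 = 0) (hy2i : y2 0 = 0) (hy2di : y2d 0 = 1)
    (hh : ∀ z, HasDerivAt h (hd z) z)
    (hhd : ∀ z, HasDerivAt hd ((ν - P z) * h z) z) (z : ℝ) :
    h z = h 0 * y1 z + hd 0 * y2 z ∧ hd z = h 0 * y1d z + hd 0 * y2d z := by
  have hW : ∀ t, y1 t * y2d t - y2 t * y1d t = 1 := by
    intro t
    have hder : ∀ s, HasDerivAt (fun u => y1 u * y2d u - y2 u * y1d u) 0 s := by
      intro s
      have := ((hy1 s).mul (hy2d s)).sub ((hy2 s).mul (hy1d s))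
      exact this.congr_deriv (by ring)
    have := constC_of_hasDerivAt_zero hder t 0
    simpa [hy1i, hy2i, hy1di, hy2di] using this
  have hA : ∀ t, h t * y2d t - hd t * y2 t = h 0 := by
    intro t
    have hder : ∀ s, HasDerivAt (fun u => h u * y2d u - hd u * y2 u) 0 s := by
      intro s
      have := ((hh s).mul (hy2d s)).sub ((hhd s).mul (hy2 s))
      exact this.congr_deriv (by ring)
    have := constC_of_hasDerivAt_zero hder t 0
    simpa [hy2i, hy2di] using this
  have hB : ∀ t, hd t * y1 t - h t * y1d t = hd 0 := by
    intro t
    have hder : ∀ s, HasDerivAt (fun u => hd u * y1 u - h u * y1d u) 0 s := by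
      intro s
      have := ((hhd s).mul (hy1 s)).sub ((hh s).mul (hy1d s))
      exact this.congr_deriv (by ring)
    have := constC_of_hasDerivAt_zero hder t 0
    simpa [hy1i, hy1di] using this
  constructor
  · linear_combination y1 z * hA z + y2 z * hB z - h z * hW z
  · linear_combination y1d z * hA z + y2d z * hB z - hd z * hW z

lemma exp_hasDerivAt (β : ℂ) (z : ℝ) :
    HasDerivAt (fun t : ℝ => Complex.exp (β * t)) (β * Complex.exp (β * z)) z := by
  have h1 : HasDerivAt (fun t : ℝ => β * (t : ℂ)) β z := by
    simpa using (Complex.ofRealCLM.hasDerivAt (x := z)).const_mul β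
  simpa [mul_comm] using h1.cexp

lemma kg_to_hill (α ν : ℂ) (P : ℝ → ℂ) (w wd wdd : ℝ → ℂ)
    (hw : ∀ z, HasDerivAt w (wd z) z) (hwd : ∀ z, HasDerivAt wd (wdd z) z)
    (hode : ∀ z, wdd z - 2 * α * wd z + α ^ 2 * w z = (ν - P z) * w z) :
    (∀ z : ℝ, HasDerivAt (fun t : ℝ => Complex.exp (-α * t) * w t)
      (Complex.exp (-α * z) * (wd z - α * w z)) z) ∧
    (∀ z : ℝ, HasDerivAt (fun t : ℝ => Complex.exp (-α * t) * (wd t - α * w t))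
      ((ν - P z) * (Complex.exp (-α * z) * w z)) z) := by
  constructor
  · intro z
    have := (exp_hasDerivAt (-α) z).mul (hw z)
    exact this.congr_deriv (by ring)
  · intro z
    have := (exp_hasDerivAt (-α) z).mul ((hwd z).sub ((hw z).const_mul α))
    refine this.congr_deriv ?_
    simp only [Pi.sub_apply]
    linear_combination Complex.exp (-α * (z : ℂ)) * hode z

theorem monodromy_trace_relation
    (c : ℝ) (hc : c ^ 2 ≠ 1) (T : ℝ) (hT : 0 < T) (lam : ℂ)
    (Q : ℝ → ℝ) (hQ : Continuous Q)
    (ν : ℂ) (hν : ν = (lam / ((c : ℂ) ^ 2 - 1)) ^ 2)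
    (w1 w1d w1dd w2 w2d w2dd : ℝ → ℂ)
    (hw1 : ∀ z, HasDerivAt w1 (w1d z) z) (hw1d : ∀ z, HasDerivAt w1d (w1dd z) z)
    (hw2 : ∀ z, HasDerivAt w2 (w2d z) z) (hw2d : ∀ z, HasDerivAt w2d (w2dd z) z)
    (hw1ode : ∀ z : ℝ, ((c : ℂ) ^ 2 - 1) * w1dd z - 2 * (c : ℂ) * lam * w1d z
        + (lam ^ 2 + (Q z : ℂ)) * w1 z = 0)
    (hw2ode : ∀ z : ℝ, ((c : ℂ) ^ 2 - 1) * w2dd z - 2 * (c : ℂ) * lam * w2d z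
        + (lam ^ 2 + (Q z : ℂ)) * w2 z = 0)
    (hw1i : w1 0 = 1) (hw1di : w1d 0 = 0) (hw2i : w2 0 = 0) (hw2di : w2d 0 = 1)
    (y1 y1d y2 y2d : ℝ → ℂ)
    (hy1 : ∀ z, HasDerivAt y1 (y1d z) z)
    (hy1d : ∀ z : ℝ, HasDerivAt y1d (ν * y1 z - ((Q z : ℂ) / ((c : ℂ) ^ 2 - 1)) * y1 z) z)
    (hy2 : ∀ z, HasDerivAt y2 (y2d z) z)
    (hy2d : ∀ z : ℝ, HasDerivAt y2d (ν * y2 z - ((Q z : ℂ) / ((c : ℂ) ^ 2 - 1)) * y2 z) z)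
    (hy1i : y1 0 = 1) (hy1di : y1d 0 = 0) (hy2i : y2 0 = 0) (hy2di : y2d 0 = 1)
 :
    w1 T + w2d T = Complex.exp ((c : ℂ) * lam * (T : ℂ) / ((c : ℂ) ^ 2 - 1))
        * (y1 T + y2d T) := by
  set s : ℂ := (c : ℂ) ^ 2 - 1 with hs
  have hc2 : (c : ℂ) ^ 2 ≠ 1 := by exact_mod_cast hc
  have hc' : s ≠ 0 := sub_ne_zero.mpr hc2
  set α : ℂ := (c : ℂ) * lam / s with hα
  set P : ℝ → ℂ := fun z => (Q z : ℂ) / s with hP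
  have hy1d' : ∀ z, HasDerivAt y1d ((ν - P z) * y1 z) z := by
    intro z; have := hy1d z; convert this using 1; simp [hP]; ring
  have hy2d' : ∀ z, HasDerivAt y2d ((ν - P z) * y2 z) z := by
    intro z; have := hy2d z; convert this using 1; simp [hP]; ring
  have hαs : α * s = (c : ℂ) * lam := by rw [hα]; field_simp
  have hνs : ν * s ^ 2 = lam ^ 2 := by rw [hν]; field_simp
  have hPs : ∀ t, P t * s = (Q t : ℂ) := by intro t; rw [hP]; field_simp
  have hode1 : ∀ z, w1dd z - 2 * α * w1d z + α ^ 2 * w1 z = (ν - P z) * w1 z := by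
    intro z
    have key : s ^ 2 * (w1dd z - 2 * α * w1d z + α ^ 2 * w1 z)
        = s ^ 2 * ((ν - P z) * w1 z) := by
      linear_combination s * hw1ode z + (-2 * s * w1d z + (α * s + (c : ℂ) * lam) * w1 z) * hαs
        - w1 z * hνs + s * w1 z * hPs z - lam ^ 2 * w1 z * hs
    exact mul_left_cancel₀ (pow_ne_zero 2 hc') key
  have hode2 : ∀ z, w2dd z - 2 * α * w2d z + α ^ 2 * w2 z = (ν - P z) * w2 z := by
    intro z
    have key : s ^ 2 * (w2dd z - 2 * α * w2d z + α ^ 2 * w2 z)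
        = s ^ 2 * ((ν - P z) * w2 z) := by
      linear_combination s * hw2ode z + (-2 * s * w2d z + (α * s + (c : ℂ) * lam) * w2 z) * hαs
        - w2 z * hνs + s * w2 z * hPs z - lam ^ 2 * w2 z * hs
    exact mul_left_cancel₀ (pow_ne_zero 2 hc') key
  obtain ⟨hh1, hh1d⟩ := kg_to_hill α ν P w1 w1d w1dd hw1 hw1d hode1
  obtain ⟨hh2, hh2d⟩ := kg_to_hill α ν P w2 w2d w2dd hw2 hw2d hode2
  have E1 := (hill_unique P ν y1 y1d y2 y2d _ _ hy1 hy1d' hy2 hy2d'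
    hy1i hy1di hy2i hy2di hh1 hh1d T).1
  have E2 := (hill_unique P ν y1 y1d y2 y2d _ _ hy1 hy1d' hy2 hy2d'
    hy1i hy1di hy2i hy2di hh2 hh2d T).1
  have E2d := (hill_unique P ν y1 y1d y2 y2d _ _ hy1 hy1d' hy2 hy2d'
    hy1i hy1di hy2i hy2di hh2 hh2d T).2
  simp only [Complex.ofReal_zero, mul_zero, Complex.exp_zero, one_mul, hw1i, hw1di,
    hw2i, hw2di, mul_one, zero_sub, sub_zero, mul_zero] at E1 E2 E2d
  -- E1 : exp(-αT) * w1 T = 1 * y1 T + (-α) * y2 T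
  -- E2 : exp(-αT) * w2 T = 0 * y1 T + 1 * y2 T
  -- E2d : exp(-αT) * (w2d T - α * w2 T) = 0 * y1d T + 1 * y2d T
  have key : Complex.exp (-α * T) * (w1 T + w2d T) = y1 T + y2d T := by
    linear_combination E1 + E2d + α * E2
  have hinv : Complex.exp (α * T) * Complex.exp (-α * T) = 1 := by
    rw [← Complex.exp_add]; ring_nf; exact Complex.exp_zero
  have hE : (c : ℂ) * lam * (T : ℂ) / s = α * T := by rw [hα]; ring
  rw [hE]
  calc w1 T + w2d T = Complex.exp (α * T) * (Complex.exp (-α * T) * (w1 T + w2d T)) := by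
        rw [← mul_assoc, hinv, one_mul]
    _ = Complex.exp (α * T) * (y1 T + y2d T) := by rw [key]
end
end

section
/- Let c ∈ ℝ with c² ≠ 1, T > 0, λ ∈ ℂ, and let Q : ℝ → ℝ be continuous. Let w₁, w₂ : ℝ → ℂ be the unique solutions of the spectral problem (c²−1)w'' − 2cλw' + (λ² + Q(z))w = 0 with w₁(0) = 1, w₁'(0) = 0, w₂(0) = 0, w₂'(0) = 1, and let y₁, y₂ : ℝ → ℂ be the unique solutions of Hill's equation y'' + (Q(z)/(c²−1))y = ν y, with ν := (λ/(c²−1))², satisfying y₁(0) = 1, y₁'(0) = 0, y₂(0) = 0, y₂'(0) = 1. Set a := cλ/(c²−1), M := [[w₁(T), w₂(T)], [w₁'(T), w₂'(T)]], Mᴴ := [[y₁(T), y₂(T)], [y₁'(T), y₂'(T)]], and C := [[1, 0], [a, 1]]. Then M = e^{aT}·C·Mᴴ·C⁻¹. In particular, μ ∈ ℂ is an eigenvalue of Mᴴ if and only if e^{aT}·μ is an eigenvalue of M, i.e., the Floquet multipliers of the spectral problem are e^{cλT/(c²−1)} times those of Hill's equation. -/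
open Real Filter Set

noncomputable section

private lemma ode2_unique (T : ℝ) (hT : 0 < T) (β : ℝ → ℂ) (hβ : Continuous β) (γ : ℂ)
    (f fd g gd : ℝ → ℂ)
    (hf : ∀ z, HasDerivAt f (fd z) z)
    (hfd : ∀ z, HasDerivAt fd (β z * f z + γ * fd z) z)
    (hg : ∀ z, HasDerivAt g (gd z) z)
    (hgd : ∀ z, HasDerivAt gd (β z * g z + γ * gd z) z)
    (h0 : f 0 = g 0) (h0d : fd 0 = gd 0) :
    f T = g T ∧ fd T = gd T := by
  set cl : ℝ → ℝ := fun t => max 0 (min t T) with hcl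
  have hclmem : ∀ t, cl t ∈ Icc 0 T := fun t =>
    ⟨le_max_left _ _, max_le (le_of_lt hT) (min_le_right _ _)⟩
  obtain ⟨Cb, hCb⟩ := (isCompact_Icc (a := (0:ℝ)) (b := T)).exists_bound_of_continuousOn
    hβ.continuousOn
  set βc : ℝ → ℂ := fun t => β (cl t) with hβc
  have hβcb : ∀ t, ‖βc t‖ ≤ max Cb 0 := fun t =>
    le_trans (hCb _ (hclmem t)) (le_max_left _ _)
  set v : ℝ → ℂ × ℂ → ℂ × ℂ := fun t x => (x.2, βc t * x.1 + γ * x.2) with hv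
  set K : NNReal := ⟨1 + max Cb 0 + ‖γ‖, by positivity⟩ with hK
  have hlip : ∀ t, LipschitzOnWith K (v t) univ := by
    intro t
    apply LipschitzWith.lipschitzOnWith
    apply LipschitzWith.of_dist_le_mul
    intro x y
    have h1 : dist x.1 y.1 ≤ dist x y := by rw [Prod.dist_eq]; exact le_max_left _ _
    have h2 : dist x.2 y.2 ≤ dist x y := by rw [Prod.dist_eq]; exact le_max_right _ _
    have hd0 : (0:ℝ) ≤ dist x y := dist_nonneg
    have hKval : (K : ℝ) = 1 + max Cb 0 + ‖γ‖ := rfl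
    rw [Prod.dist_eq]
    apply max_le
    · calc dist (v t x).1 (v t y).1 = dist x.2 y.2 := rfl
        _ ≤ dist x y := h2
        _ ≤ K * dist x y := by rw [hKval]; nlinarith [norm_nonneg γ, le_max_right Cb 0]
    · have : dist (v t x).2 (v t y).2 = ‖βc t * (x.1 - y.1) + γ * (x.2 - y.2)‖ := by
        rw [dist_eq_norm]; simp only [hv]; ring_nf
      rw [this]
      calc ‖βc t * (x.1 - y.1) + γ * (x.2 - y.2)‖
          ≤ ‖βc t * (x.1 - y.1)‖ + ‖γ * (x.2 - y.2)‖ := norm_add_le _ _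
        _ = ‖βc t‖ * dist x.1 y.1 + ‖γ‖ * dist x.2 y.2 := by
            rw [norm_mul, norm_mul, dist_eq_norm, dist_eq_norm]
        _ ≤ (max Cb 0) * dist x y + ‖γ‖ * dist x y :=
            add_le_add (mul_le_mul (hβcb t) h1 dist_nonneg (le_max_right Cb 0))
              (mul_le_mul_of_nonneg_left h2 (norm_nonneg γ))
        _ ≤ K * dist x y := by rw [hKval]; nlinarith
  set F : ℝ → ℂ × ℂ := fun z => (f z, fd z) with hF
  set G : ℝ → ℂ × ℂ := fun z => (g z, gd z) with hG
  have hFc : Continuous F := by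
    apply Continuous.prodMk
    · exact continuous_iff_continuousAt.2 fun z => (hf z).continuousAt
    · exact continuous_iff_continuousAt.2 fun z => (hfd z).continuousAt
  have hGc : Continuous G := by
    apply Continuous.prodMk
    · exact continuous_iff_continuousAt.2 fun z => (hg z).continuousAt
    · exact continuous_iff_continuousAt.2 fun z => (hgd z).continuousAt
  have hclid : ∀ t ∈ Ico (0:ℝ) T, βc t = β t := by
    intro t ht
    have : cl t = t := by
      simp only [hcl]
      rw [min_eq_left (le_of_lt ht.2), max_eq_right ht.1]
    simp only [hβc, this]
  have hF' : ∀ t ∈ Ico (0:ℝ) T, HasDerivWithinAt F (v t (F t)) (Ici t) t := by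
    intro t ht
    have h1 : HasDerivAt F (fd t, β t * f t + γ * fd t) t := (hf t).prodMk (hfd t)
    have h2 : v t (F t) = (fd t, β t * f t + γ * fd t) := by
      simp only [hv, hF, hclid t ht]
    rw [h2]; exact h1.hasDerivWithinAt
  have hG' : ∀ t ∈ Ico (0:ℝ) T, HasDerivWithinAt G (v t (G t)) (Ici t) t := by
    intro t ht
    have h1 : HasDerivAt G (gd t, β t * g t + γ * gd t) t := (hg t).prodMk (hgd t)
    have h2 : v t (G t) = (gd t, β t * g t + γ * gd t) := by
      simp only [hv, hG, hclid t ht]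
    rw [h2]; exact h1.hasDerivWithinAt
  have key : EqOn F G (Icc 0 T) :=
    ODE_solution_unique_of_mem_Icc_right (fun t _ => hlip t) hFc.continuousOn hF'
      (fun t _ => mem_univ _) hGc.continuousOn hG' (fun t _ => mem_univ _)
      (by simp only [hF, hG, h0, h0d])
  have := key (right_mem_Icc.2 (le_of_lt hT))
  exact ⟨congrArg Prod.fst this, congrArg Prod.snd this⟩

private lemma algid' (d cc lam u v q : ℂ) (hd : d ≠ 0) (hdc : d = cc^2 - 1) :
    (cc*lam/d) * ((cc*lam/d)*u+v) + ((cc*lam/d)*v + ((lam/d)^2 - q/d)*u)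
      = (-(lam^2+q)/d)*u + (2*cc*lam/d)*((cc*lam/d)*u+v) := by
  have hdinv : d * d⁻¹ = 1 := mul_inv_cancel₀ hd
  linear_combination (lam^2*u/d^2) * hdc + (-(lam^2*u/d)) * hdinv

theorem monodromy_conjugation_relation
    (c : ℝ) (hc : c ^ 2 ≠ 1) (T : ℝ) (hT : 0 < T) (lam : ℂ)
    (Q : ℝ → ℝ) (hQ : Continuous Q)
    (ν : ℂ) (hν : ν = (lam / ((c : ℂ) ^ 2 - 1)) ^ 2)
    (w1 w1d w1dd w2 w2d w2dd : ℝ → ℂ)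
    (hw1 : ∀ z, HasDerivAt w1 (w1d z) z) (hw1d : ∀ z, HasDerivAt w1d (w1dd z) z)
    (hw2 : ∀ z, HasDerivAt w2 (w2d z) z) (hw2d : ∀ z, HasDerivAt w2d (w2dd z) z)
    (hw1ode : ∀ z : ℝ, ((c : ℂ) ^ 2 - 1) * w1dd z - 2 * (c : ℂ) * lam * w1d z
        + (lam ^ 2 + (Q z : ℂ)) * w1 z = 0)
    (hw2ode : ∀ z : ℝ, ((c : ℂ) ^ 2 - 1) * w2dd z - 2 * (c : ℂ) * lam * w2d z
        + (lam ^ 2 + (Q z : ℂ)) * w2 z = 0)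
    (hw1i : w1 0 = 1) (hw1di : w1d 0 = 0) (hw2i : w2 0 = 0) (hw2di : w2d 0 = 1)
    (y1 y1d y2 y2d : ℝ → ℂ)
    (hy1 : ∀ z, HasDerivAt y1 (y1d z) z)
    (hy1d : ∀ z : ℝ, HasDerivAt y1d (ν * y1 z - ((Q z : ℂ) / ((c : ℂ) ^ 2 - 1)) * y1 z) z)
    (hy2 : ∀ z, HasDerivAt y2 (y2d z) z)
    (hy2d : ∀ z : ℝ, HasDerivAt y2d (ν * y2 z - ((Q z : ℂ) / ((c : ℂ) ^ 2 - 1)) * y2 z) z)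
    (hy1i : y1 0 = 1) (hy1di : y1d 0 = 0) (hy2i : y2 0 = 0) (hy2di : y2d 0 = 1)
    (a : ℂ) (ha : a = (c : ℂ) * lam / ((c : ℂ) ^ 2 - 1))
    (M : Matrix (Fin 2) (Fin 2) ℂ) (hM : M = !![w1 T, w2 T; w1d T, w2d T])
    (MH : Matrix (Fin 2) (Fin 2) ℂ) (hMH : MH = !![y1 T, y2 T; y1d T, y2d T])
    (C : Matrix (Fin 2) (Fin 2) ℂ) (hC : C = !![1, 0; a, 1]) :
    M = Complex.exp (a * (T : ℂ)) • (C * MH * C⁻¹) ∧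
    (∀ μ : ℂ, μ ∈ spectrum ℂ MH ↔ Complex.exp (a * (T : ℂ)) * μ ∈ spectrum ℂ M) := by
  have hc' : ((c:ℂ)^2 - 1) ≠ 0 := sub_ne_zero.mpr (by exact_mod_cast hc)
  obtain ⟨β, hβ⟩ : ∃ β : ℝ → ℂ, β = fun z => -(lam^2 + (Q z : ℂ))/((c:ℂ)^2 - 1) := ⟨_, rfl⟩
  obtain ⟨γ, hγ⟩ : ∃ γ : ℂ, γ = 2*(c:ℂ)*lam/((c:ℂ)^2 - 1) := ⟨_, rfl⟩
  have hβcont : Continuous β := by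
    rw [hβ]
    exact ((continuous_const.add (Complex.continuous_ofReal.comp hQ)).neg).div_const _
  have hexp : ∀ z : ℝ, HasDerivAt (fun z : ℝ => Complex.exp (a * z))
      (a * Complex.exp (a * z)) z := by
    intro z
    have h1 : HasDerivAt (fun z : ℝ => ((z : ℝ) : ℂ)) 1 z := by
      simpa using HasDerivAt.ofReal_comp (hasDerivAt_id z)
    simpa [mul_comm] using (h1.const_mul a).cexp
  -- the core transfer lemma
  have main : ∀ (w wd wdd φ φd : ℝ → ℂ),
      (∀ z, HasDerivAt w (wd z) z) → (∀ z, HasDerivAt wd (wdd z) z) →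
      (∀ z : ℝ, ((c : ℂ) ^ 2 - 1) * wdd z - 2 * (c : ℂ) * lam * wd z
        + (lam ^ 2 + (Q z : ℂ)) * w z = 0) →
      (∀ z, HasDerivAt φ (φd z) z) →
      (∀ z : ℝ, HasDerivAt φd ((ν - (Q z : ℂ)/((c:ℂ)^2 - 1)) * φ z) z) →
      w 0 = φ 0 → wd 0 = a * φ 0 + φd 0 →
      w T = Complex.exp (a * T) * φ T ∧
        wd T = Complex.exp (a * T) * (a * φ T + φd T) := by
    intro w wd wdd φ φd hw hwd hode hφ hφd hi hdi
    set g : ℝ → ℂ := fun z => Complex.exp (a * z) * φ z with hg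
    set gd : ℝ → ℂ := fun z => Complex.exp (a * z) * (a * φ z + φd z) with hgd
    have hwd' : ∀ z, HasDerivAt wd (β z * w z + γ * wd z) z := by
      intro z
      have h := hode z
      have : wdd z = β z * w z + γ * wd z := by
        rw [hβ, hγ]
        have hdinv : ((c:ℂ)^2 - 1) * ((c:ℂ)^2 - 1)⁻¹ = 1 := mul_inv_cancel₀ hc'
        linear_combination ((c:ℂ)^2 - 1)⁻¹ * h + (-(wdd z)) * hdinv
      rw [← this]; exact hwd z
    have hgder : ∀ z, HasDerivAt g (gd z) z := by
      intro z
      have := (hexp z).fun_mul (hφ z)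
      refine this.congr_deriv ?_
      simp only [hgd]; ring
    have hgdder : ∀ z, HasDerivAt gd (β z * g z + γ * gd z) z := by
      intro z
      have hin : HasDerivAt (fun z => a * φ z + φd z)
          (a * φd z + (ν - (Q z : ℂ)/((c:ℂ)^2 - 1)) * φ z) z :=
        ((hφ z).const_mul a).add (hφd z)
      have hmul := (hexp z).mul hin
      have key := algid' ((c:ℂ)^2 - 1) (c:ℂ) lam (φ z) (φd z) (Q z : ℂ) hc' rfl
      rw [← ha, ← hν, ← hγ] at key
      have heq : β z * g z + γ * gd z
          = a * Complex.exp (a * z) * (a * φ z + φd z)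
            + Complex.exp (a * z) * (a * φd z + (ν - (Q z : ℂ)/((c:ℂ)^2 - 1)) * φ z) := by
        simp only [hg, hgd, hβ]
        linear_combination (-(Complex.exp (a * (z:ℂ)))) * key
      rw [heq]
      exact hmul
    have h0 : w 0 = g 0 := by simp [hg, hi]
    have h0d : wd 0 = gd 0 := by simp [hgd, hdi]
    have := ode2_unique T hT β hβcont γ w wd g gd hw hwd' hgder hgdder h0 h0d
    refine ⟨?_, ?_⟩
    · simpa [hg] using this.1
    · simpa [hgd] using this.2
  -- apply to w1 with φ = y1 - a • y2
  obtain ⟨E1, E2⟩ := main w1 w1d w1dd (fun z => y1 z - a * y2 z) (fun z => y1d z - a * y2d z)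
    hw1 hw1d hw1ode (fun z => (hy1 z).sub ((hy2 z).const_mul a))
    (fun z => by
      have := (hy1d z).fun_sub ((hy2d z).const_mul a)
      refine this.congr_deriv ?_
      ring)
    (by simp [hw1i, hy1i, hy2i])
    (by simp [hw1di, hy1i, hy1di, hy2i, hy2di])
  obtain ⟨E3, E4⟩ := main w2 w2d w2dd y2 y2d hw2 hw2d hw2ode hy2 (fun z => by rw [sub_mul]; exact hy2d z)
    (by simp [hw2i, hy2i]) (by simp [hw2di, hy2i, hy2di])
  have hCinv : C⁻¹ = !![1, 0; -a, 1] := by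
    apply Matrix.inv_eq_right_inv
    rw [hC]
    ext i j
    fin_cases i <;> fin_cases j <;>
      simp [Matrix.mul_apply, Fin.sum_univ_two]
  have hMeq : M = Complex.exp (a * (T : ℂ)) • (C * MH * C⁻¹) := by
    rw [hM, hCinv, hC, hMH]
    ext i j
    fin_cases i <;> fin_cases j <;>
      simp [Matrix.mul_apply, Fin.sum_univ_two] <;>
      [linear_combination E1; linear_combination E3;
       linear_combination E2; linear_combination E4]
  refine ⟨hMeq, fun μ => ?_⟩
  have hdet : IsUnit C.det := by
    rw [hC, Matrix.det_fin_two_of]; simp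
  set u : (Matrix (Fin 2) (Fin 2) ℂ)ˣ := Matrix.nonsingInvUnit C hdet with hu
  have hconj : spectrum ℂ (C * MH * C⁻¹) = spectrum ℂ MH := by
    have h := spectrum.units_conjugate (R := ℂ) (a := MH) (u := u)
    have hu1 : (u : Matrix (Fin 2) (Fin 2) ℂ) = C := rfl
    have hu2 : ((u⁻¹ : (Matrix (Fin 2) (Fin 2) ℂ)ˣ) : Matrix (Fin 2) (Fin 2) ℂ) = C⁻¹ := rfl
    rw [hu1, hu2] at h
    exact h
  set r : ℂˣ := Units.mk0 (Complex.exp (a * (T : ℂ))) (Complex.exp_ne_zero _) with hr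
  have hsmul : r • μ ∈ spectrum ℂ (r • (C * MH * C⁻¹)) ↔ μ ∈ spectrum ℂ (C * MH * C⁻¹) :=
    spectrum.smul_mem_smul_iff
  have h1 : r • μ = Complex.exp (a * (T : ℂ)) * μ := rfl
  have h2 : r • (C * MH * C⁻¹) = M := by
    rw [Units.smul_def, hMeq]; rfl
  rw [h1, h2, hconj] at hsmul
  exact hsmul.symm
end
end

section
/- Let c, T ∈ ℝ with c² ≠ 1 and T > 0, and let Δ be a complex-analytic function on a neighborhood of 0 in ℂ with Δ(0) = 2. Define g(λ) := e^{2λcT/(c²−1)} − e^{λcT/(c²−1)}·Δ(λ²/(c²−1)²) + 1 (when Δ is the Hill discriminant of a periodic traveling wave, g equals the periodic Evans function D(λ,1) = det(M(λ) − I), where M(λ) is the monodromy matrix of the linearized Klein–Gordon spectral problem). Then g(0) = 0, g'(0) = 0, and g''(0) = 2(c²T² − Δ'(0))/(c²−1)²; equivalently, g(λ) = ((c²T² − Δ'(0))/(c²−1)²)·λ² + O(λ³) as λ → 0. -/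
open Real Filter Set

noncomputable section

lemma evans_key (a b : ℂ) (Δ : ℂ → ℂ) (hΔ : AnalyticAt ℂ Δ 0) (hΔ0 : Δ 0 = 2)
    (g : ℂ → ℂ)
    (hg : g = fun l : ℂ => Complex.exp (2 * a * l) - Complex.exp (a * l) * Δ (b * l ^ 2) + 1) :
    g 0 = 0 ∧ deriv g 0 = 0 ∧ deriv (deriv g) 0 = 2 * a ^ 2 - 2 * b * deriv Δ 0 := by
  have hA : ∀ᶠ y in nhds (0 : ℂ), AnalyticAt ℂ Δ y := hΔ.eventually_analyticAt
  have hφcont : Tendsto (fun l : ℂ => b * l ^ 2) (nhds 0) (nhds 0) := by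
    have : Continuous (fun l : ℂ => b * l ^ 2) := by continuity
    simpa using this.tendsto 0
  have hE : ∀ᶠ l in nhds (0 : ℂ), AnalyticAt ℂ Δ (b * l ^ 2) := hφcont.eventually hA
  set G1 : ℂ → ℂ := fun l =>
    2 * a * Complex.exp (2 * a * l) -
      (a * Complex.exp (a * l) * Δ (b * l ^ 2) +
        Complex.exp (a * l) * (deriv Δ (b * l ^ 2) * (2 * b * l))) with hG1
  have hgd : ∀ᶠ l in nhds (0 : ℂ), HasDerivAt g (G1 l) l := by
    filter_upwards [hE] with l hl
    have hφd : HasDerivAt (fun x : ℂ => b * x ^ 2) (2 * b * l) l := by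
      have := (hasDerivAt_pow 2 l).const_mul b
      simpa [mul_comm, mul_assoc, mul_left_comm] using this
    have hΔd : HasDerivAt (fun x : ℂ => Δ (b * x ^ 2)) (deriv Δ (b * l ^ 2) * (2 * b * l)) l :=
      (hl.differentiableAt.hasDerivAt).comp l hφd
    have h1 : HasDerivAt (fun x : ℂ => Complex.exp (2 * a * x))
        (2 * a * Complex.exp (2 * a * l)) l := by
      have := ((hasDerivAt_id l).const_mul (2 * a)).cexp
      simpa [mul_comm] using this
    have h2 : HasDerivAt (fun x : ℂ => Complex.exp (a * x)) (a * Complex.exp (a * l)) l := by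
      have := ((hasDerivAt_id l).const_mul a).cexp
      simpa [mul_comm] using this
    rw [hg]
    exact (h1.sub (h2.mul hΔd)).add_const 1
  have hev : deriv g =ᶠ[nhds (0:ℂ)] G1 := hgd.mono fun l h => h.deriv
  have hG10 : G1 0 = 0 := by simp [hG1, hΔ0]; ring
  refine ⟨by simp [hg, hΔ0]; norm_num, ?_, ?_⟩
  · have := hev.self_of_nhds
    rw [this, hG10]
  · have heq2 : deriv (deriv g) 0 = deriv G1 0 := hev.deriv_eq
    have hΔhd : HasDerivAt Δ (deriv Δ 0) 0 := hΔ.differentiableAt.hasDerivAt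
    have hΔ'an : AnalyticAt ℂ (deriv Δ) 0 := by
      obtain ⟨s, hsmem, hs⟩ := hA.exists_mem
      exact (AnalyticOnNhd.deriv (fun y hy => hs y hy)) 0 (mem_of_mem_nhds hsmem)
    have hΔ'hd : HasDerivAt (deriv Δ) (deriv (deriv Δ) 0) 0 :=
      hΔ'an.differentiableAt.hasDerivAt
    have hφ0 : HasDerivAt (fun x : ℂ => b * x ^ 2) 0 0 := by
      have := (hasDerivAt_pow 2 (0:ℂ)).const_mul b
      simpa using this
    have hΔc : HasDerivAt (fun x : ℂ => Δ (b * x ^ 2)) 0 0 := by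
      have := (by simpa using hΔhd : HasDerivAt Δ (deriv Δ 0) (b * (0:ℂ) ^ 2)).comp 0 hφ0
      exact this.congr_deriv (by simp)
    have hΔ'c : HasDerivAt (fun x : ℂ => deriv Δ (b * x ^ 2)) 0 0 := by
      have := (by simpa using hΔ'hd :
        HasDerivAt (deriv Δ) (deriv (deriv Δ) 0) (b * (0:ℂ) ^ 2)).comp 0 hφ0
      exact this.congr_deriv (by simp)
    have h1 : HasDerivAt (fun x : ℂ => Complex.exp (2 * a * x))
        (2 * a * Complex.exp (2 * a * 0)) 0 := by
      have := ((hasDerivAt_id (0:ℂ)).const_mul (2 * a)).cexp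
      simpa [mul_comm] using this
    have h2 : HasDerivAt (fun x : ℂ => Complex.exp (a * x)) (a * Complex.exp (a * 0)) 0 := by
      have := ((hasDerivAt_id (0:ℂ)).const_mul a).cexp
      simpa [mul_comm] using this
    have hlin : HasDerivAt (fun x : ℂ => 2 * b * x) (2 * b) 0 := by
      simpa using (hasDerivAt_id (0:ℂ)).const_mul (2 * b)
    have hterm3 : HasDerivAt (fun x : ℂ => deriv Δ (b * x ^ 2) * (2 * b * x))
        (0 * (2 * b * 0) + deriv Δ (b * 0 ^ 2) * (2 * b)) 0 := hΔ'c.mul hlin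
    have hG1d : HasDerivAt G1
        (2 * a * (2 * a * Complex.exp (2 * a * 0)) -
          ((a * (a * Complex.exp (a * 0)) * Δ (b * 0 ^ 2) + a * Complex.exp (a * 0) * 0) +
            (a * Complex.exp (a * 0) * (deriv Δ (b * 0 ^ 2) * (2 * b * 0)) +
              Complex.exp (a * 0) *
                (0 * (2 * b * 0) + deriv Δ (b * 0 ^ 2) * (2 * b))))) 0 := by
      exact ((h1.const_mul (2 * a)).sub
        (((h2.const_mul a).mul hΔc).add (h2.mul hterm3))).congr_deriv (by ring)
    rw [heq2, hG1d.deriv]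
    simp [hΔ0]
    ring

theorem periodic_evans_function_expansion
    (c T : ℝ) (hc : c ^ 2 ≠ 1) (hT : 0 < T)
    (Δ : ℂ → ℂ) (hΔ : AnalyticAt ℂ Δ 0) (hΔ0 : Δ 0 = 2)
    (g : ℂ → ℂ)
    (hg : g = fun lam : ℂ =>
      Complex.exp (2 * lam * (c : ℂ) * (T : ℂ) / ((c : ℂ) ^ 2 - 1))
        - Complex.exp (lam * (c : ℂ) * (T : ℂ) / ((c : ℂ) ^ 2 - 1))
            * Δ (lam ^ 2 / ((c : ℂ) ^ 2 - 1) ^ 2) + 1) :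
    g 0 = 0 ∧ deriv g 0 = 0 ∧
      deriv (deriv g) 0 = 2 * ((c : ℂ) ^ 2 * (T : ℂ) ^ 2 - deriv Δ 0) / ((c : ℂ) ^ 2 - 1) ^ 2 := by
  have hc' : ((c:ℂ)^2 - 1) ≠ 0 := by
    intro h
    apply hc
    have h2 : ((c:ℂ))^2 = 1 := sub_eq_zero.mp h
    exact_mod_cast h2
  set a : ℂ := (c:ℂ) * T / ((c:ℂ)^2 - 1) with ha
  set b : ℂ := 1 / ((c:ℂ)^2 - 1)^2 with hb
  have hg' : g = fun l : ℂ => Complex.exp (2 * a * l) - Complex.exp (a * l) * Δ (b * l ^ 2) + 1 := by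
    rw [hg]
    funext l
    have e1 : 2 * l * (c:ℂ) * T / ((c:ℂ)^2 - 1) = 2 * a * l := by rw [ha]; ring
    have e2 : l * (c:ℂ) * T / ((c:ℂ)^2 - 1) = a * l := by rw [ha]; ring
    have e3 : l ^ 2 / ((c:ℂ)^2 - 1)^2 = b * l ^ 2 := by rw [hb]; ring
    rw [e1, e2, e3]
  obtain ⟨h0, h1, h2⟩ := evans_key a b Δ hΔ hΔ0 g hg'
  refine ⟨h0, h1, ?_⟩
  rw [h2, ha, hb]
  field_simp
end
end
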